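/- Let S be an N×N real symmetric matrix, D an N×N real diagonal matrix, and ψ ∈ ℝ with |ψ|·‖S‖₂ < 1. Let n_0, n_1, … be random vectors in ℝ^N with E[n_τ] = 0, E[n_τ n_τᵀ] = σ² I for all τ, and E[n_τ n_{τ'}ᵀ] = 0 for τ ≠ τ'; define w̃_0 = 0 and w̃_t = ψ S w̃_{t−1} + (ψS − D) n_{t−1} for t ≥ 1. Let W₀ = Σ_{t=0}^{∞} ψ^{2t} S^{2t}. Then the asymptotic average noise power per node ζ = lim_{t→∞} (1/N)·tr(E[w̃_t w̃_tᵀ]) exists and equals (σ²/N)·tr( (ψS − D)ᵀ W₀ (ψS − D) ) = (σ²/N)·( ψ² tr(W₀ S²) + tr(W₀ D²) − 2ψ tr(W₀ S D) ). -/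

import Mathlib

open MeasureTheory Matrix Filter

/-- Spectral norm (largest singular value) of a real square matrix. -/
noncomputable def specNorm {N : ℕ} (X : Matrix (Fin N) (Fin N) ℝ) : ℝ :=
  ‖Matrix.toEuclideanCLM (𝕜 := ℝ) X‖

/-- Entrywise expectation of a random matrix. -/
noncomputable def mExp {Ω : Type} [MeasurableSpace Ω] {N : ℕ} (μ : Measure Ω)
    (X : Ω → Matrix (Fin N) (Fin N) ℝ) : Matrix (Fin N) (Fin N) ℝ :=
  Matrix.of fun i j => ∫ ω, X ω i j ∂μ

set_option maxHeartbeats 1000000 in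
set_option synthInstance.maxHeartbeats 400000 in
/-- Proposition 2, deterministic ARMA.
For the recursion `w̃_t = ψ S w̃_{t−1} + (ψS − D) n_{t−1}` with `|ψ|·‖S‖₂ < 1` and
zero-mean uncorrelated noise of covariance `σ² I`, the asymptotic average noise power per
node `ζ = lim_{t→∞} (1/N)·tr(E[w̃_t w̃_tᵀ])` exists, equals
`(σ²/N)·tr((ψS − D)ᵀ W₀ (ψS − D))`, which in turn equals
`(σ²/N)·(ψ² tr(W₀ S²) + tr(W₀ D²) − 2ψ tr(W₀ S D))`, where `W₀ = Σ_t ψ^{2t} S^{2t}`. -/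
theorem stmt5 {Ω : Type} [MeasurableSpace Ω] (μ : Measure Ω) [IsProbabilityMeasure μ]
    {N : ℕ} (hN : 0 < N) (S D : Matrix (Fin N) (Fin N) ℝ) (hS : S.IsSymm) (hD : D.IsDiag)
    (ψ σ : ℝ) (hψ : |ψ| * specNorm S < 1) (n : ℕ → Ω → Fin N → ℝ)
    (hn_int : ∀ τ τ' i j, Integrable (fun ω => n τ ω i * n τ' ω j) μ)
    (hn_mean : ∀ τ i, ∫ ω, n τ ω i ∂μ = 0)
    (hn_cov : ∀ τ i j,
      ∫ ω, n τ ω i * n τ ω j ∂μ = σ ^ 2 * (1 : Matrix (Fin N) (Fin N) ℝ) i j)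
    (hn_cross : ∀ τ τ', τ ≠ τ' → ∀ i j, ∫ ω, n τ ω i * n τ' ω j ∂μ = 0)
    (w : ℕ → Ω → Fin N → ℝ) (hw0 : ∀ ω, w 0 ω = 0)
    (hw : ∀ τ ω, w (τ + 1) ω = (ψ • S).mulVec (w τ ω) + (ψ • S - D).mulVec (n τ ω))
    (W₀ : Matrix (Fin N) (Fin N) ℝ) (hW₀ : W₀ = ∑' t : ℕ, ψ ^ (2 * t) • S ^ (2 * t)) :
    Tendsto
      (fun t : ℕ => (1 / N : ℝ) * (mExp μ (fun ω => vecMulVec (w t ω) (w t ω))).trace)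
      atTop
      (nhds ((σ ^ 2 / N) * ((ψ • S - D)ᵀ * W₀ * (ψ • S - D)).trace)) ∧
    (σ ^ 2 / N) * ((ψ • S - D)ᵀ * W₀ * (ψ • S - D)).trace
      = (σ ^ 2 / N) * (ψ ^ 2 * (W₀ * S ^ 2).trace + (W₀ * D ^ 2).trace
          - 2 * ψ * (W₀ * S * D).trace) := by
    classical
  set B : Matrix (Fin N) (Fin N) ℝ := ψ • S - D with hB
  have hAsymm : (ψ • S)ᵀ = ψ • S := by rw [Matrix.transpose_smul, hS.eq]
  have hBsymm : Bᵀ = B := by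
    rw [hB, Matrix.transpose_sub, Matrix.transpose_smul, hS.eq, hD.isSymm.eq]
  -- closed form for w
  have hclosed : ∀ t ω, w t ω
      = ∑ k ∈ Finset.range t, (((ψ • S) ^ (t - 1 - k) * B) *ᵥ (n k ω)) := by
    intro t
    induction t with
    | zero => intro ω; simp [hw0]
    | succ t ih =>
      intro ω
      rw [hw, ih, Finset.sum_range_succ]
      have h2 : t + 1 - 1 - t = 0 := by omega
      have h1 : (ψ • S) *ᵥ (∑ k ∈ Finset.range t, (((ψ • S) ^ (t - 1 - k) * B) *ᵥ (n k ω)))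
          = ∑ k ∈ Finset.range t, (((ψ • S) ^ (t + 1 - 1 - k) * B) *ᵥ (n k ω)) := by
        rw [show (ψ • S) *ᵥ (∑ k ∈ Finset.range t, (((ψ • S) ^ (t - 1 - k) * B) *ᵥ (n k ω)))
            = ∑ k ∈ Finset.range t, ((ψ • S) *ᵥ (((ψ • S) ^ (t - 1 - k) * B) *ᵥ (n k ω)))
          from map_sum (Matrix.mulVecLin (ψ • S)) _ _]
        refine Finset.sum_congr rfl fun k hk => ?_
        rw [Matrix.mulVec_mulVec, ← Matrix.mul_assoc, ← pow_succ']
        have hk' := Finset.mem_range.mp hk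
        have he : t - 1 - k + 1 = t + 1 - 1 - k := by omega
        rw [he]
      rw [h1, h2]
      simp
  -- second-moment computation
  have hmExp : ∀ t, mExp μ (fun ω => vecMulVec (w t ω) (w t ω))
      = ∑ k ∈ Finset.range t, σ ^ 2 •
          (((ψ • S) ^ (t - 1 - k) * B) * ((ψ • S) ^ (t - 1 - k) * B)ᵀ) := by
    intro t
    set C : ℕ → Matrix (Fin N) (Fin N) ℝ := fun k => (ψ • S) ^ (t - 1 - k) * B with hC
    have hint0 : ∀ (c : ℝ) (k k' : ℕ) (l m : Fin N),
        Integrable (fun ω => c * (n k ω l * n k' ω m)) μ :=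
      fun c k k' l m => (hn_int k k' l m).const_mul c
    ext i j
    have hexp : ∀ ω, vecMulVec (w t ω) (w t ω) i j
        = ∑ k ∈ Finset.range t, ∑ k' ∈ Finset.range t, ∑ l, ∑ m,
            (C k i l * C k' j m) * (n k ω l * n k' ω m) := by
      intro ω
      rw [Matrix.vecMulVec_apply, hclosed]
      simp only [Finset.sum_apply, Matrix.mulVec, dotProduct]
      rw [Finset.sum_mul_sum]
      refine Finset.sum_congr rfl fun k _ => Finset.sum_congr rfl fun k' _ => ?_
      rw [Finset.sum_mul_sum]
      refine Finset.sum_congr rfl fun l _ => Finset.sum_congr rfl fun m _ => ?_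
      ring
    show (∫ ω, vecMulVec (w t ω) (w t ω) i j ∂μ) = _
    calc (∫ ω, vecMulVec (w t ω) (w t ω) i j ∂μ)
        = ∫ ω, (∑ k ∈ Finset.range t, ∑ k' ∈ Finset.range t, ∑ l, ∑ m,
            (C k i l * C k' j m) * (n k ω l * n k' ω m)) ∂μ := by
          exact integral_congr_ae (Filter.Eventually.of_forall hexp)
      _ = ∑ k ∈ Finset.range t, ∑ k' ∈ Finset.range t, ∑ l, ∑ m,
            (C k i l * C k' j m) * ∫ ω, n k ω l * n k' ω m ∂μ := by
          rw [integral_finset_sum _ (fun k _ => integrable_finset_sum _ (fun k' _ =>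
            integrable_finset_sum _ (fun l _ => integrable_finset_sum _ (fun m _ =>
              hint0 _ _ _ _ _))))]
          refine Finset.sum_congr rfl fun k _ => ?_
          rw [integral_finset_sum _ (fun k' _ => integrable_finset_sum _ (fun l _ =>
            integrable_finset_sum _ (fun m _ => hint0 _ _ _ _ _)))]
          refine Finset.sum_congr rfl fun k' _ => ?_
          rw [integral_finset_sum _ (fun l _ => integrable_finset_sum _ (fun m _ =>
            hint0 _ _ _ _ _))]
          refine Finset.sum_congr rfl fun l _ => ?_
          rw [integral_finset_sum _ (fun m _ => hint0 _ _ _ _ _)]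
          exact Finset.sum_congr rfl fun m _ => integral_const_mul _ _
      _ = ∑ k ∈ Finset.range t, ∑ l, ∑ m,
            (C k i l * C k j m) * (σ ^ 2 * (1 : Matrix (Fin N) (Fin N) ℝ) l m) := by
          refine Finset.sum_congr rfl fun k hk => ?_
          rw [Finset.sum_eq_single_of_mem k hk]
          · exact Finset.sum_congr rfl fun l _ => Finset.sum_congr rfl fun m _ => by
              rw [hn_cov]
          · intro k' _ hne
            simp [hn_cross k k' (Ne.symm hne)]
      _ = (∑ k ∈ Finset.range t, σ ^ 2 • (C k * (C k)ᵀ)) i j := by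
          simp only [Matrix.sum_apply, Matrix.smul_apply, Matrix.mul_apply,
            Matrix.transpose_apply, Matrix.one_apply, smul_eq_mul, mul_ite, mul_one, mul_zero,
            Finset.sum_ite_eq, Finset.mem_univ, if_true]
          refine Finset.sum_congr rfl fun k _ => ?_
          rw [Finset.mul_sum]
          exact Finset.sum_congr rfl fun l _ => by ring
  -- the matrix identity for each term
  have hXident : ∀ e : ℕ, ((ψ • S) ^ e * B)ᵀ * ((ψ • S) ^ e * B)
      = Bᵀ * (ψ ^ (2 * e) • S ^ (2 * e)) * B := by
    intro e
    rw [Matrix.transpose_mul, Matrix.transpose_pow, hAsymm, Matrix.mul_assoc,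
      ← Matrix.mul_assoc ((ψ • S) ^ e) ((ψ • S) ^ e) B, ← pow_add, ← two_mul, smul_pow,
      ← Matrix.mul_assoc]
  -- trace formula
  have htr : ∀ t, (1 / N : ℝ) * (mExp μ (fun ω => vecMulVec (w t ω) (w t ω))).trace
      = (σ ^ 2 / N) * ∑ j ∈ Finset.range t,
          (Bᵀ * (ψ ^ (2 * j) • S ^ (2 * j)) * B).trace := by
    intro t
    rw [hmExp, Matrix.trace_sum]
    simp only [Matrix.trace_smul, smul_eq_mul]
    have hterm : ∀ k, (((ψ • S) ^ (t - 1 - k) * B) * ((ψ • S) ^ (t - 1 - k) * B)ᵀ).trace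
        = (fun e => (Bᵀ * (ψ ^ (2 * e) • S ^ (2 * e)) * B).trace) (t - 1 - k) := by
      intro k
      rw [Matrix.trace_mul_comm, hXident]
    simp only [hterm]
    rw [← Finset.mul_sum,
      Finset.sum_range_reflect (fun e => (Bᵀ * (ψ ^ (2 * e) • S ^ (2 * e)) * B).trace) t]
    ring
  -- summability
  set f : ℕ → Matrix (Fin N) (Fin N) ℝ := fun j => ψ ^ (2 * j) • S ^ (2 * j) with hf
  set T : EuclideanSpace ℝ (Fin N) →L[ℝ] EuclideanSpace ℝ (Fin N) :=
    Matrix.toEuclideanCLM (𝕜 := ℝ) S with hT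
  have hfe : ∀ j, Matrix.toEuclideanCLM (𝕜 := ℝ) (f j) = ψ ^ (2 * j) • T ^ (2 * j) := by
    intro j
    rw [hf, hT]
    simp only [_root_.map_smul, _root_.map_pow]
  have hr0 : 0 ≤ |ψ| * specNorm S := mul_nonneg (abs_nonneg _) (norm_nonneg _)
  have hsumg : Summable (fun j => Matrix.toEuclideanCLM (𝕜 := ℝ) (f j)) := by
    refine Summable.of_norm_bounded (g := fun j => ((|ψ| * specNorm S) ^ 2) ^ j)
      (summable_geometric_of_lt_one (by positivity) (pow_lt_one₀ hr0 hψ two_ne_zero)) ?_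
    intro j
    rw [hfe, norm_smul (ψ ^ (2 * j)) (T ^ (2 * j)), norm_pow, Real.norm_eq_abs]
    rcases Nat.eq_zero_or_pos j with hj | hj
    · subst hj
      simp only [mul_zero, pow_zero, one_mul]
      exact ContinuousLinearMap.norm_id_le
    · calc |ψ| ^ (2 * j) * ‖T ^ (2 * j)‖
          ≤ |ψ| ^ (2 * j) * ‖T‖ ^ (2 * j) := by
            gcongr
            exact norm_pow_le' T (by omega)
        _ = ((|ψ| * specNorm S) ^ 2) ^ j := by
            rw [specNorm, ← hT, ← mul_pow, ← pow_mul]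
  have hsumf : Summable f := by
    let ℓ : (EuclideanSpace ℝ (Fin N) →L[ℝ] EuclideanSpace ℝ (Fin N)) →ₗ[ℝ]
        Matrix (Fin N) (Fin N) ℝ :=
      { toFun := fun x => (Matrix.toEuclideanCLM (𝕜 := ℝ)).symm x
        map_add' := fun x y => map_add _ x y
        map_smul' := fun c x => _root_.map_smul _ c x }
    have hcont : Continuous ℓ := ℓ.continuous_of_finiteDimensional
    have := hsumg.map ℓ hcont
    refine this.congr fun j => ?_
    show (Matrix.toEuclideanCLM (𝕜 := ℝ)).symm (Matrix.toEuclideanCLM (𝕜 := ℝ) (f j)) = f j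
    exact StarAlgEquiv.symm_apply_apply _ _
  have hsumfW : HasSum f W₀ := by
    rw [hW₀]
    exact hsumf.hasSum
  -- main limit
  have hsum2 : HasSum (fun j => (Bᵀ * f j * B).trace) ((Bᵀ * W₀ * B).trace) := by
    have := hsumfW.mapL (LinearMap.toContinuousLinearMap
      ((Matrix.traceLinearMap (Fin N) ℝ ℝ).comp
        ((LinearMap.mulRight ℝ B).comp (LinearMap.mulLeft ℝ Bᵀ))))
    simpa only [LinearMap.coe_toContinuousLinearMap', LinearMap.coe_comp,
      Function.comp_apply, Matrix.traceLinearMap_apply,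
      LinearMap.mulLeft_apply, LinearMap.mulRight_apply] using this
  refine ⟨?_, ?_⟩
  · exact ((hsum2.tendsto_sum_nat.const_mul (σ ^ 2 / N)).congr fun t => (htr t).symm)
  · -- algebra for the second equality
    have hSW : S * W₀ = W₀ * S := by
      have h1 := hsumfW.mapL (LinearMap.toContinuousLinearMap (LinearMap.mulLeft ℝ S))
      have h2 := hsumfW.mapL (LinearMap.toContinuousLinearMap (LinearMap.mulRight ℝ S))
      simp only [LinearMap.coe_toContinuousLinearMap', LinearMap.mulLeft_apply,
        LinearMap.mulRight_apply] at h1 h2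
      have h3 : ∀ j, S * f j = f j * S := by
        intro j
        rw [hf]
        rw [Matrix.mul_smul, Matrix.smul_mul, ((Commute.refl S).pow_right (2 * j)).eq]
      have h1' : HasSum (fun j => f j * S) (S * W₀) := by
        simpa only [h3] using h1
      exact h1'.unique h2
    congr 1
    rw [hBsymm, hB]
    have pow2 : ∀ M : Matrix (Fin N) (Fin N) ℝ, M ^ 2 = M * M := fun M => sq M
    have t1 : (S * W₀ * S).trace = (W₀ * S ^ 2).trace := by
      rw [Matrix.trace_mul_comm (S * W₀) S, ← Matrix.mul_assoc,
        Matrix.trace_mul_comm (S * S) W₀, ← pow2]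
    have t2 : (D * W₀ * D).trace = (W₀ * D ^ 2).trace := by
      rw [Matrix.trace_mul_comm (D * W₀) D, ← Matrix.mul_assoc,
        Matrix.trace_mul_comm (D * D) W₀, ← pow2]
    have t3 : (S * W₀ * D).trace = (W₀ * S * D).trace := by rw [hSW]
    have t4 : (D * W₀ * S).trace = (W₀ * S * D).trace := by
      rw [Matrix.trace_mul_comm (D * W₀) S, ← Matrix.mul_assoc,
        Matrix.trace_mul_comm (S * D) W₀, ← Matrix.mul_assoc]
    simp only [Matrix.sub_mul, Matrix.mul_sub, Matrix.smul_mul, Matrix.mul_smul,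
      Matrix.trace_sub, Matrix.trace_smul, smul_smul, smul_eq_mul]
    rw [t1, t2, t3, t4]
    ring
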